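/- Let p be an odd prime and G = P(m,n,q,l) the metacyclic p-group ⟨x, y | x^(p^m) = 1, y^(p^n) = x^(p^q), (x,y) = x^(p^l)⟩ with n = q, n + l ≥ m, and (p^l+1)^(p^n) ≡ 1 mod p^m. Set z = y·x^(p^(m−n)−1). Then z^(p^n) = 1. -/

import Mathlib

open Finset

private lemma two_mul_add_one_le_aux (e : ℕ) : 2 * e + 1 ≤ 3 ^ e := by
  induction e with
  | zero => norm_num
  | succ n ih =>
    have h : 3 ^ (n + 1) = 3 * 3 ^ n := by ring
    omega

private lemma factor_le_aux (p e k : ℕ) (hp3 : 3 ≤ p) (hk : 2 ≤ k) (hpe : p ^ e ≤ k) :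
    e + 2 ≤ k := by
  rcases e with _ | e
  · omega
  · have h1 := two_mul_add_one_le_aux (e + 1)
    have h2 : 3 ^ (e + 1) ≤ p ^ (e + 1) := Nat.pow_le_pow_left hp3 _
    omega

private lemma key_dvd_aux (p n l k : ℕ) (hp : p.Prime) (hp3 : 3 ≤ p) (hl : 1 ≤ l)
    (hk2 : 2 ≤ k) (hkN : k ≤ p ^ n) :
    p ^ (n + 2 * l) ∣ p ^ (l * k) * (p ^ n).choose k := by
  have hk0 : k ≠ 0 := by omega
  set e := k.factorization p with he
  have hpe : p ^ e ∣ k := Nat.ordProj_dvd k p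
  have hpek : p ^ e ≤ k := Nat.ordProj_le p hk0
  have hek : e + 2 ≤ k := factor_le_aux p e k hp3 hk2 hpek
  have hN : 0 < p ^ n := pow_pos hp.pos n
  -- p^n ∣ k * choose
  have hNdvd : p ^ n ∣ k * (p ^ n).choose k := by
    have hs := Nat.add_one_mul_choose_eq (p ^ n - 1) (k - 1)
    have h1 : p ^ n - 1 + 1 = p ^ n := by omega
    have h2 : k - 1 + 1 = k := by omega
    rw [h1, h2] at hs
    exact ⟨(p ^ n - 1).choose (k - 1), by rw [hs]; ring⟩
  set k' := k / p ^ e with hk'def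
  have hkk : k = p ^ e * k' := (Nat.ordProj_mul_ordCompl_eq_self k p).symm
  have hk'p : ¬ p ∣ k' := Nat.not_dvd_ordCompl hp hk0
  have hen : e ≤ n :=
    (Nat.pow_le_pow_iff_right hp.one_lt).mp (le_trans hpek hkN)
  have h5 : p ^ e * (p ^ (n - e)) ∣ p ^ e * (k' * (p ^ n).choose k) := by
    rw [← pow_add, show e + (n - e) = n by omega]
    calc p ^ n ∣ k * (p ^ n).choose k := hNdvd
      _ = p ^ e * (k' * (p ^ n).choose k) := by rw [hkk]; ring
  have h6 : p ^ (n - e) ∣ k' * (p ^ n).choose k :=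
    (Nat.mul_dvd_mul_iff_left (pow_pos hp.pos e)).mp h5
  have hcop : Nat.Coprime (p ^ (n - e)) k' :=
    Nat.Coprime.pow_left _ ((Nat.Prime.coprime_iff_not_dvd hp).mpr hk'p)
  have hdvdC : p ^ (n - e) ∣ (p ^ n).choose k := hcop.dvd_of_dvd_mul_left h6
  have hle : n + 2 * l ≤ (n - e) + l * k := by
    have h7 : l * (e + 2) ≤ l * k := Nat.mul_le_mul_left l hek
    have h8 : e ≤ l * e := Nat.le_mul_of_pos_left e (by omega)
    have h9 : l * (e + 2) = l * e + 2 * l := by ring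
    omega
  calc p ^ (n + 2 * l) ∣ p ^ ((n - e) + l * k) := pow_dvd_pow p hle
    _ = p ^ (l * k) * p ^ (n - e) := by rw [pow_add]; ring
    _ ∣ p ^ (l * k) * (p ^ n).choose k := mul_dvd_mul_left _ hdvdC

private lemma geom_aux (p l : ℕ) :
    ∀ M, p ^ l * (∑ i ∈ Finset.range M, (p ^ l + 1) ^ i) + 1 = (p ^ l + 1) ^ M := by
  intro M
  induction M with
  | zero => simp
  | succ M ih =>
    rw [geom_sum_succ']
    calc p ^ l * ((p ^ l + 1) ^ M + ∑ i ∈ Finset.range M, (p ^ l + 1) ^ i) + 1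
        = p ^ l * (p ^ l + 1) ^ M +
          (p ^ l * ∑ i ∈ Finset.range M, (p ^ l + 1) ^ i + 1) := by ring
      _ = p ^ l * (p ^ l + 1) ^ M + (p ^ l + 1) ^ M := by rw [ih]
      _ = (p ^ l + 1) ^ (M + 1) := by ring

private lemma geom_sum_eq_aux (p n l : ℕ) (hp : p.Prime) (hp3 : 3 ≤ p) (hl : 1 ≤ l) :
    ∃ t, ∑ i ∈ Finset.range (p ^ n), (p ^ l + 1) ^ i = p ^ n + p ^ (n + l) * t := by
  have hN : 1 ≤ p ^ n := Nat.one_le_pow _ _ hp.pos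
  have hexp : (p ^ l + 1) ^ (p ^ n) =
      (∑ i ∈ Finset.range (p ^ n - 1), (p ^ l) ^ (i + 2) * (p ^ n).choose (i + 2))
        + p ^ l * p ^ n + 1 := by
    rw [add_pow]
    simp only [one_pow, mul_one]
    rw [show p ^ n + 1 = (p ^ n - 1) + 1 + 1 by omega]
    rw [Finset.sum_range_succ', Finset.sum_range_succ']
    simp [Nat.choose_one_right]
  have hT : p ^ (n + 2 * l) ∣
      ∑ i ∈ Finset.range (p ^ n - 1), (p ^ l) ^ (i + 2) * (p ^ n).choose (i + 2) := by
    apply Finset.dvd_sum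
    intro i hi
    have hi' : i < p ^ n - 1 := Finset.mem_range.mp hi
    have h := key_dvd_aux p n l (i + 2) hp hp3 hl (by omega) (by omega)
    rwa [pow_mul] at h
  obtain ⟨t, ht⟩ := hT
  have hg := geom_aux p l (p ^ n)
  refine ⟨t, Nat.eq_of_mul_eq_mul_left (pow_pos hp.pos l) ?_⟩
  have h1 : p ^ l * (∑ i ∈ Finset.range (p ^ n), (p ^ l + 1) ^ i) + 1
      = p ^ (n + 2 * l) * t + p ^ l * p ^ n + 1 := by rw [hg, hexp, ht]
  have h2 : p ^ (n + 2 * l) * t = p ^ l * (p ^ (n + l) * t) := by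
    rw [← mul_assoc, ← pow_add]; ring_nf
  have h3 : p ^ l * p ^ n = p ^ l * p ^ n := rfl
  have h4 : p ^ l * (p ^ n + p ^ (n + l) * t)
      = p ^ l * p ^ n + p ^ l * (p ^ (n + l) * t) := by ring
  omega

/-- In the metacyclic p-group `P(m,n,q,l)` (p odd) with `n = q`, `n + l ≥ m`,
the element `z = y * x^(p^(m-n) - 1)` satisfies `z^(p^n) = 1`. -/
theorem metacyclic_z_pow_eq_one {G : Type*} [Group G] (p m n q l : ℕ) (hp : p.Prime)
    (hodd : Odd p) (hm : 1 ≤ m) (hn : 1 ≤ n) (hq : 1 ≤ q) (hl : 1 ≤ l)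
    (hqn : q = n) (hnl : m ≤ n + l) (hql : m ≤ q + l) (hlm : l ≤ m) (hqm : q ≤ m)
    (hcong1 : (p ^ l + 1) ^ p ^ n ≡ 1 [MOD p ^ m])
    (hcong2 : (p ^ l + 1) * p ^ q ≡ p ^ q [MOD p ^ m])
    (x y : G) (hx : x ^ p ^ m = 1) (hy : y ^ p ^ n = x ^ p ^ q)
    (hrel : x⁻¹ * y⁻¹ * x * y = x ^ p ^ l) :
    (y * x ^ (p ^ (m - n) - 1)) ^ p ^ n = 1 := by
  have hp3 : 3 ≤ p := by
    have h2 := hp.two_le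
    have ho := Nat.odd_iff.mp hodd
    omega
  have h1 : y⁻¹ * x * y = x ^ (p ^ l + 1) := by
    calc y⁻¹ * x * y = x * (x⁻¹ * y⁻¹ * x * y) := by group
      _ = x * x ^ p ^ l := by rw [hrel]
      _ = x ^ (p ^ l + 1) := (pow_succ' x (p ^ l)).symm
  have hxy : ∀ k : ℕ, x ^ k * y = y * x ^ (k * (p ^ l + 1)) := by
    intro k
    have h2 : y⁻¹ * x ^ k * y = (y⁻¹ * x * y) ^ k := by
      induction k with
      | zero => simp
      | succ k ih => rw [pow_succ x, pow_succ (y⁻¹ * x * y), ← ih]; group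
    calc x ^ k * y = y * (y⁻¹ * x ^ k * y) := by group
      _ = y * (y⁻¹ * x * y) ^ k := by rw [h2]
      _ = y * (x ^ (p ^ l + 1)) ^ k := by rw [h1]
      _ = y * x ^ (k * (p ^ l + 1)) := by rw [← pow_mul, Nat.mul_comm]
  set r : ℕ := p ^ l + 1 with hr
  set a : ℕ := p ^ (m - n) - 1 with ha
  have key : ∀ k : ℕ,
      (y * x ^ a) ^ k = y ^ k * x ^ (a * ∑ i ∈ Finset.range k, r ^ i) := by
    intro k
    induction k with
    | zero => simp
    | succ k ih =>
      rw [pow_succ, ih, geom_sum_succ]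
      calc y ^ k * x ^ (a * ∑ i ∈ Finset.range k, r ^ i) * (y * x ^ a)
          = y ^ k * (x ^ (a * ∑ i ∈ Finset.range k, r ^ i) * y) * x ^ a := by group
        _ = y ^ k * (y * x ^ ((a * ∑ i ∈ Finset.range k, r ^ i) * r)) * x ^ a := by
            rw [hxy]
        _ = y ^ (k + 1) * x ^ ((a * ∑ i ∈ Finset.range k, r ^ i) * r + a) := by
            rw [pow_succ y, pow_add x]; group
        _ = y ^ (k + 1) * x ^ (a * (r * ∑ i ∈ Finset.range k, r ^ i + 1)) := by
            rw [show a * (r * ∑ i ∈ Finset.range k, r ^ i + 1)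
                = (a * ∑ i ∈ Finset.range k, r ^ i) * r + a from by ring]
  obtain ⟨t, ht⟩ := geom_sum_eq_aux p n l hp hp3 hl
  rw [key (p ^ n), hy, ← pow_add]
  have hnm : n ≤ m := hqn ▸ hqm
  have hdvd : p ^ m ∣ p ^ q + a * ∑ i ∈ Finset.range (p ^ n), r ^ i := by
    rw [hqn, ht, ha]
    have h1le : 1 ≤ p ^ (m - n) := Nat.one_le_pow _ _ hp.pos
    have hZ : (p : ℤ) ^ m ∣
        ((p ^ n + (p ^ (m - n) - 1) * (p ^ n + p ^ (n + l) * t) : ℕ) : ℤ) := by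
      push_cast [Nat.cast_sub h1le]
      have hexp : ((p : ℤ) ^ n + ((p : ℤ) ^ (m - n) - 1) * ((p : ℤ) ^ n + (p : ℤ) ^ (n + l) * t))
          = (p : ℤ) ^ m + ((p : ℤ) ^ (m - n) - 1) * (p : ℤ) ^ (n + l) * t := by
        rw [show (p : ℤ) ^ m = (p : ℤ) ^ (m - n) * (p : ℤ) ^ n by
          rw [← pow_add]; congr 1; omega]
        ring
      rw [hexp]
      exact dvd_add (dvd_refl _) (((pow_dvd_pow (p : ℤ) hnl).mul_left _).mul_right _)
    exact_mod_cast hZ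
  obtain ⟨c, hc⟩ := hdvd
  rw [hc, pow_mul, hx, one_pow]
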